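/- arXiv:2501.03658 — 2 statements merged into one kernel-verified Lean document; each statement's English description precedes it below -/
import Mathlib

section
/- The Riccati equation P'(t) = −η²𝔮²P(t)² − P(t)(2η − 2η𝔮²) + 𝔭², with P(0) = 0, where 𝔭² + 𝔮² = 1 and η > 0, admits a unique global solution on [0,∞), and this solution satisfies P(t) ≥ 0 for all t ≥ 0. -/
open Real Set

/-- Barrier lemma: if `F c < 0` and `Q 0 ≤ c`, a solution of `Q' = F ∘ Q` on `Ici 0`
stays `≤ c`. -/
lemma riccati_upper_barrier {F Q : ℝ → ℝ} {c : ℝ}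
    (hQ' : ∀ t ∈ Ici (0:ℝ), HasDerivWithinAt Q (F (Q t)) (Ici 0) t)
    (hFc : F c < 0) (h0 : Q 0 ≤ c) : ∀ t ∈ Ici (0:ℝ), Q t ≤ c := by
  intro t₁ ht₁
  by_contra hgt
  push_neg at hgt
  have hcont : ContinuousOn Q (Ici 0) := fun t ht => (hQ' t ht).continuousWithinAt
  have ht₁0 : (0:ℝ) ≤ t₁ := ht₁
  set S : Set ℝ := Icc 0 t₁ ∩ Q ⁻¹' Iic c with hSdef
  have hne : S.Nonempty := ⟨0, ⟨le_refl 0, ht₁0⟩, h0⟩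
  have hScl : IsClosed S :=
    (hcont.mono Icc_subset_Ici_self).preimage_isClosed_of_isClosed isClosed_Icc isClosed_Iic
  have hbdd : BddAbove S := BddAbove.mono (inter_subset_left) bddAbove_Icc
  set t₀ := sSup S with ht₀def
  have ht₀S : t₀ ∈ S := hScl.csSup_mem hne hbdd
  have ht₀0 : (0:ℝ) ≤ t₀ := ht₀S.1.1
  have ht₀t₁ : t₀ < t₁ := lt_of_le_of_ne ht₀S.1.2 (by
    intro h; rw [h] at ht₀S; exact absurd ht₀S.2 (not_le.mpr hgt))
  have hmem : ∀ t ∈ Ioc t₀ t₁, c < Q t := by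
    intro t ht
    by_contra hle
    push_neg at hle
    have : t ∈ S := ⟨⟨le_trans ht₀0 ht.1.le, ht.2⟩, hle⟩
    exact absurd (le_csSup hbdd this) (not_le.mpr ht.1)
  -- Q t₀ = c
  haveI hNB : (nhdsWithin t₀ (Ioc t₀ t₁)).NeBot := by
    apply mem_closure_iff_nhdsWithin_neBot.mp
    rw [closure_Ioc (ne_of_lt ht₀t₁)]
    exact ⟨le_refl _, ht₀t₁.le⟩
  have hQc : Q t₀ = c := by
    refine le_antisymm ht₀S.2 ?_
    have htend : Filter.Tendsto Q (nhdsWithin t₀ (Ioc t₀ t₁)) (nhds (Q t₀)) :=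
      (hcont t₀ ht₀0).tendsto.mono_left
        (nhdsWithin_mono _ (fun x (hx : x ∈ Ioc t₀ t₁) => le_trans ht₀0 hx.1.le))
    refine ge_of_tendsto htend ?_
    filter_upwards [self_mem_nhdsWithin] with t ht
    exact (hmem t ht).le
  -- slope argument
  have hslope : Filter.Tendsto (slope Q t₀) (nhdsWithin t₀ (Ici 0 \ {t₀})) (nhds (F (Q t₀))) :=
    hasDerivWithinAt_iff_tendsto_slope.mp (hQ' t₀ ht₀0)
  have hslope' : Filter.Tendsto (slope Q t₀) (nhdsWithin t₀ (Ioc t₀ t₁)) (nhds (F (Q t₀))) :=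
    hslope.mono_left (nhdsWithin_mono _ (fun x hx =>
      ⟨le_trans ht₀0 hx.1.le, ne_of_gt hx.1⟩))
  have h0le : 0 ≤ F (Q t₀) := by
    refine ge_of_tendsto hslope' ?_
    filter_upwards [self_mem_nhdsWithin] with t ht
    rw [slope_def_field]
    have h1 : 0 < Q t - Q t₀ := by rw [hQc]; linarith [hmem t ht]
    have h2 : 0 < t - t₀ := by linarith [ht.1]
    positivity
  rw [hQc] at h0le
  linarith

/-- Barrier lemma: if `0 < F c` and `c ≤ Q 0`, a solution stays `≥ c`. -/
lemma riccati_lower_barrier {F Q : ℝ → ℝ} {c : ℝ}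
    (hQ' : ∀ t ∈ Ici (0:ℝ), HasDerivWithinAt Q (F (Q t)) (Ici 0) t)
    (hFc : 0 < F c) (h0 : c ≤ Q 0) : ∀ t ∈ Ici (0:ℝ), c ≤ Q t := by
  have h := riccati_upper_barrier (F := fun x => -F (-x)) (Q := fun t => -Q t) (c := -c)
    (fun t ht => by have h := (hQ' t ht).neg; simp only [neg_neg]; exact h) (by simpa using hFc) (by simpa using h0)
  intro t ht
  have := h t ht
  simpa using this

/-- The Riccati equation
`P' = -η²𝔮² P² - P(2η - 2η𝔮²) + 𝔭²`, `P(0) = 0`, with `𝔭² + 𝔮² = 1` and `η > 0`, admits a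
unique global solution on `[0,∞)`, and this solution is nonnegative. -/
theorem statement11 (η pf qf : ℝ) (hη : 0 < η)
    (hpf : 0 < pf) (hpf1 : pf < 1) (hqf : 0 < qf) (hqf1 : qf < 1)
    (hpq : pf ^ 2 + qf ^ 2 = 1) :
    (∃ P : ℝ → ℝ,
        (P 0 = 0 ∧ ∀ t ∈ Ici (0:ℝ),
          HasDerivWithinAt P
            (-η ^ 2 * qf ^ 2 * (P t) ^ 2 - P t * (2 * η - 2 * η * qf ^ 2) + pf ^ 2)
            (Ici 0) t) ∧
        (∀ Q : ℝ → ℝ,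
          (Q 0 = 0 ∧ ∀ t ∈ Ici (0:ℝ),
            HasDerivWithinAt Q
              (-η ^ 2 * qf ^ 2 * (Q t) ^ 2 - Q t * (2 * η - 2 * η * qf ^ 2) + pf ^ 2)
              (Ici 0) t) →
          ∀ t ∈ Ici (0:ℝ), Q t = P t)) ∧
      ∀ P : ℝ → ℝ,
        (P 0 = 0 ∧ ∀ t ∈ Ici (0:ℝ),
          HasDerivWithinAt P
            (-η ^ 2 * qf ^ 2 * (P t) ^ 2 - P t * (2 * η - 2 * η * qf ^ 2) + pf ^ 2)
            (Ici 0) t) →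
        ∀ t ∈ Ici (0:ℝ), 0 ≤ P t := by
  have hq2 : qf ^ 2 = 1 - pf ^ 2 := by linarith
  set F : ℝ → ℝ := fun x => -η ^ 2 * qf ^ 2 * x ^ 2 - x * (2 * η - 2 * η * qf ^ 2) + pf ^ 2
    with hF
  set r : ℝ := pf / (η * (1 + pf)) with hr
  set k : ℝ := 2 * η * pf with hk
  set c₀ : ℝ := (1 - pf) / (1 + pf) with hc₀
  have h1p : (0:ℝ) < 1 + pf := by linarith
  have hrpos : 0 < r := by rw [hr]; positivity
  have hc₀pos : 0 < c₀ := by rw [hc₀]; apply div_pos <;> linarith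
  have hkpos : 0 < k := by rw [hk]; positivity
  set P : ℝ → ℝ := fun t => r * (1 - exp (-(k * t))) / (1 + c₀ * exp (-(k * t))) with hP
  have hDpos : ∀ t : ℝ, 0 < 1 + c₀ * exp (-(k * t)) := fun t => by positivity
  -- the explicit solution solves the ODE
  have hPderiv : ∀ t : ℝ, HasDerivAt P (F (P t)) t := by
    intro t
    have hexp : HasDerivAt (fun s : ℝ => exp (-(k * s))) (-k * exp (-(k * t))) t := by
      have h1 : HasDerivAt (fun s : ℝ => -(k * s)) (-k) t := by
        exact (((hasDerivAt_id t).const_mul k).neg).congr_deriv (by ring)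
      refine ((Real.hasDerivAt_exp (-(k * t))).comp t h1).congr_deriv ?_
      ring
    have hnum : HasDerivAt (fun s : ℝ => r * (1 - exp (-(k * s))))
        (r * (-(-k * exp (-(k * t))))) t := (hexp.const_sub 1).const_mul r
    have hden : HasDerivAt (fun s : ℝ => 1 + c₀ * exp (-(k * s)))
        (c₀ * (-k * exp (-(k * t)))) t := ((hexp.const_mul c₀).const_add 1)
    have hD : (1 + c₀ * exp (-(k * t))) ≠ 0 := ne_of_gt (hDpos t)
    have hdiv := hnum.div hden hD
    refine HasDerivAt.congr_deriv hdiv ?_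
    have hu0 : 0 < exp (-(k * t)) := exp_pos _
    set u : ℝ := exp (-(k * t)) with husu
    clear_value u
    simp only [hF, hP]
    rw [← husu, hq2, hr, hk, hc₀]
    have h1p' : (1:ℝ) + pf ≠ 0 := ne_of_gt h1p
    have hη' : η ≠ 0 := ne_of_gt hη
    have hE : (0:ℝ) < 1 + pf + (1 - pf) * u := by nlinarith
    have hD' : (1:ℝ) + (1 - pf) / (1 + pf) * u ≠ 0 := by
      have h2 : (1:ℝ) + (1 - pf) / (1 + pf) * u = (1 + pf + (1 - pf) * u) / (1 + pf) := by
        field_simp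
      rw [h2]
      positivity
    have hE3 : 1 + pf + u * (1 - pf) ≠ 0 := ne_of_gt (by linarith [hE, mul_comm u (1 - pf)])
    field_simp
    ring
  have hP0 : P 0 = 0 := by rw [hP]; simp
  have hPode : ∀ t ∈ Ici (0:ℝ), HasDerivWithinAt P (F (P t)) (Ici 0) t :=
    fun t _ => (hPderiv t).hasDerivWithinAt
  -- barrier values
  have hb : (0:ℝ) < 2 * η - 2 * η * qf ^ 2 := by rw [hq2]; nlinarith
  have hF0 : 0 < F 0 := by simp only [hF]; norm_num; positivity
  have hFr : F r = 0 := by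
    simp only [hF]; rw [hq2, hr]; field_simp; ring
  have hFr1 : F (r + 1) < 0 := by
    have hdiff : F (r + 1) = F r - η ^ 2 * qf ^ 2 * (2 * r + 1) - (2 * η - 2 * η * qf ^ 2) := by
      simp only [hF]; ring
    rw [hdiff, hFr]
    have : 0 < η ^ 2 * qf ^ 2 * (2 * r + 1) := by positivity
    linarith
  -- any solution stays in [0, r+1]
  have hbounds : ∀ Q : ℝ → ℝ, Q 0 = 0 →
      (∀ t ∈ Ici (0:ℝ), HasDerivWithinAt Q (F (Q t)) (Ici 0) t) →
      ∀ t ∈ Ici (0:ℝ), Q t ∈ Icc 0 (r + 1) := by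
    intro Q hQ0 hQ' t ht
    exact ⟨riccati_lower_barrier hQ' hF0 (le_of_eq hQ0.symm) t ht,
      riccati_upper_barrier hQ' hFr1 (by rw [hQ0]; positivity) t ht⟩
  -- Lipschitz constant on [0, r+1]
  set Kr : ℝ := 2 * (η ^ 2 * qf ^ 2) * (r + 1) + (2 * η - 2 * η * qf ^ 2) with hKr
  have hKr0 : 0 ≤ Kr := by
    rw [hKr]
    have h1 : (0:ℝ) ≤ η ^ 2 * qf ^ 2 := by positivity
    have h2 : (0:ℝ) ≤ 2 * (η ^ 2 * qf ^ 2) * (r + 1) :=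
      mul_nonneg (by linarith) (by linarith)
    linarith
  have hLip : LipschitzOnWith Kr.toNNReal F (Icc 0 (r + 1)) := by
    apply LipschitzOnWith.of_dist_le_mul
    intro x hx y hy
    rw [Real.dist_eq, Real.dist_eq, Real.coe_toNNReal _ hKr0]
    have hxy : F x - F y = -(η ^ 2 * qf ^ 2 * (x + y) + (2 * η - 2 * η * qf ^ 2)) * (x - y) := by
      simp only [hF]; ring
    rw [hxy, abs_mul, abs_neg]
    have hq2nn : 0 ≤ η ^ 2 * qf ^ 2 := by positivity
    have habs : |η ^ 2 * qf ^ 2 * (x + y) + (2 * η - 2 * η * qf ^ 2)| ≤ Kr := by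
      have h3 : (0:ℝ) ≤ η ^ 2 * qf ^ 2 * (x + y) :=
        mul_nonneg hq2nn (by linarith [hx.1, hy.1])
      rw [abs_of_nonneg (by linarith)]
      rw [hKr]
      have h4 := mul_le_mul_of_nonneg_left
        (show x + y ≤ 2 * (r + 1) by linarith [hx.2, hy.2]) hq2nn
      linarith
    exact mul_le_mul_of_nonneg_right habs (abs_nonneg _)
  -- uniqueness
  have huniq : ∀ Q : ℝ → ℝ, Q 0 = 0 →
      (∀ t ∈ Ici (0:ℝ), HasDerivWithinAt Q (F (Q t)) (Ici 0) t) →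
      ∀ t ∈ Ici (0:ℝ), Q t = P t := by
    intro Q hQ0 hQ' t₁ ht₁
    have ht₁0 : (0:ℝ) ≤ t₁ := ht₁
    have key : EqOn Q P (Icc 0 t₁) := by
      apply ODE_solution_unique_of_mem_Icc_right
        (v := fun _ x => F x) (s := fun _ => Icc 0 (r + 1)) (K := Kr.toNNReal)
      · exact fun _ _ => hLip
      · exact fun s hs => ((hQ' s hs.1).continuousWithinAt).mono Icc_subset_Ici_self
      · exact fun s hs => (hQ' s hs.1).mono (Ici_subset_Ici.mpr hs.1)
      · exact fun s hs => hbounds Q hQ0 hQ' s hs.1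
      · exact fun s hs => ((hPode s hs.1).continuousWithinAt).mono Icc_subset_Ici_self
      · exact fun s hs => (hPode s hs.1).mono (Ici_subset_Ici.mpr hs.1)
      · exact fun s hs => hbounds P hP0 hPode s hs.1
      · rw [hQ0, hP0]
    exact key ⟨ht₁0, le_refl _⟩
  refine ⟨⟨P, ⟨hP0, hPode⟩, fun Q hQ => huniq Q hQ.1 hQ.2⟩, ?_⟩
  intro Q hQ t ht
  exact riccati_lower_barrier hQ.2 hF0 (le_of_eq hQ.1.symm) t ht
end

section
/- The Hamiltonian H(q,u,V₁,V₂) = sup_{δ^a ≥ −δ_∞^a}(φ + ψe^{−γ(σ𝔮u ∨ 𝒮⁻)})e^{−kδ^a}(δ^a + V₁)𝟙_{q > q̲} + sup_{δ^b ≥ −δ_∞^b}(φ + ψe^{γ(σ𝔮u ∧ 𝒮⁺)})e^{−kδ^b}(δ^b + V₂)𝟙_{q < q̄} is a continuous function of (q,u,V₁,V₂) ∈ 𝒬 × ℝ³, and the suprema are attained at δ^{a,*} = max(1/k − V₁, −δ_∞^a) and δ^{b,*} = max(1/k − V₂, −δ_∞^b). -/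
open Real Set


lemma key_global (k V δ : ℝ) (hk : 0 < k) :
    exp (-k * δ) * (δ + V) ≤ exp (-k * (1/k - V)) * (1/k - V + V) := by
  have h := Real.add_one_le_exp (k * (δ - (1/k - V)))
  have he : exp (-k * δ) * exp (k * (δ - (1/k - V))) = exp (-k * (1/k - V)) := by
    rw [← Real.exp_add]; ring_nf
  have h1 : 0 < exp (-k * δ) := Real.exp_pos _
  have h2 : 0 < exp (-k * (1/k - V)) := Real.exp_pos _
  have hki : k * (1/k) = 1 := mul_one_div_cancel hk.ne'
  nlinarith [mul_le_mul_of_nonneg_left h h1.le]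

lemma key_decr (k V a b : ℝ) (hk : 0 < k) (hma : 1/k - V ≤ a) (hab : a ≤ b) :
    exp (-k * b) * (b + V) ≤ exp (-k * a) * (a + V) := by
  have h := Real.add_one_le_exp (k * (b - a))
  have he : exp (-k * b) * exp (k * (b - a)) = exp (-k * a) := by
    rw [← Real.exp_add]; ring_nf
  have h1 : 0 < exp (-k * b) := Real.exp_pos _
  have hki : k * (1/k) = 1 := mul_one_div_cancel hk.ne'
  have hav : 1 ≤ k * (a + V) := by
    have := mul_le_mul_of_nonneg_left (by linarith : 1/k ≤ a + V) hk.le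
    linarith [hki]
  have hav0 : (0:ℝ) ≤ a + V := by nlinarith
  nlinarith [mul_le_mul_of_nonneg_left h (mul_nonneg h1.le hav0),
    mul_nonneg (mul_nonneg h1.le (sub_nonneg.2 hab)) (sub_nonneg.2 hav)]

lemma maxon (k V δi c : ℝ) (hk : 0 < k) (hc : 0 ≤ c) :
    IsMaxOn (fun δ : ℝ => c * exp (-k * δ) * (δ + V)) (Set.Ici (-δi))
      (max (1/k - V) (-δi)) := by
  intro δ hδ
  simp only [mem_Ici, mem_setOf_eq] at *
  have : exp (-k * δ) * (δ + V) ≤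
      exp (-k * max (1/k - V) (-δi)) * (max (1/k - V) (-δi) + V) := by
    rcases le_total (1/k - V) (-δi) with h | h
    · rw [max_eq_right h]
      exact key_decr k V (-δi) δ hk h hδ
    · rw [max_eq_left h]
      have := key_global k V δ hk
      simpa using this
  calc c * exp (-k * δ) * (δ + V) = c * (exp (-k * δ) * (δ + V)) := by ring
    _ ≤ c * (exp (-k * max (1/k - V) (-δi)) * (max (1/k - V) (-δi) + V)) :=
        mul_le_mul_of_nonneg_left this hc
    _ = _ := by ring

lemma greatest (k V δi c : ℝ) (hk : 0 < k) (hc : 0 ≤ c) :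
    IsGreatest ((fun δ : ℝ => c * exp (-k * δ) * (δ + V)) '' Set.Ici (-δi))
      (c * exp (-k * max (1/k - V) (-δi)) * (max (1/k - V) (-δi) + V)) := by
  constructor
  · exact ⟨max (1/k - V) (-δi), mem_Ici.2 (le_max_right _ _), rfl⟩
  · rintro y ⟨δ, hδ, rfl⟩
    exact maxon k V δi c hk hc hδ

/-- The Hamiltonian of the market making problem: for inventory `q`, fad value `u` and
value differences `V₁, V₂`, the sum of the suprema over the ask and bid displacements
(each side being switched off at the inventory boundaries `q̲, q̄`). -/
noncomputable def mmHam (k γ σ qf φI ψ Sm Sp δia δib : ℝ) (qlow qhigh : ℤ)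
    (q : ℤ) (u V₁ V₂ : ℝ) : ℝ :=
  (if qlow < q then
      sSup ((fun δa : ℝ => (φI + ψ * Real.exp (-γ * max (σ * qf * u) Sm))
        * Real.exp (-k * δa) * (δa + V₁)) '' Set.Ici (-δia))
    else 0)
  + (if q < qhigh then
      sSup ((fun δb : ℝ => (φI + ψ * Real.exp (γ * min (σ * qf * u) Sp))
        * Real.exp (-k * δb) * (δb + V₂)) '' Set.Ici (-δib))
    else 0)

/-- The Hamiltonian is a continuous function of `(q,u,V₁,V₂)`
(with `q` ranging over the discrete set of inventories), and the suprema defining it are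
attained at `δᵃ* = max (1/k - V₁) (-δ∞ᵃ)` and `δᵇ* = max (1/k - V₂) (-δ∞ᵇ)`. -/
theorem statement16 (k γ σ qf φI ψ Sm Sp δia δib : ℝ) (qlow qhigh : ℤ)
    (hk : 0 < k) (hγ : 0 < γ) (hσ : 0 < σ) (hqf : 0 < qf) (hqf1 : qf < 1)
    (hφI : 0 ≤ φI) (hψ : 0 ≤ ψ) (hSm : Sm ≤ 0) (hSp : 0 ≤ Sp) (hq : qlow < qhigh) :
    Continuous (fun x : ℤ × ℝ × ℝ × ℝ =>
        mmHam k γ σ qf φI ψ Sm Sp δia δib qlow qhigh x.1 x.2.1 x.2.2.1 x.2.2.2) ∧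
      ∀ (q : ℤ) (u V₁ V₂ : ℝ),
        IsMaxOn (fun δa : ℝ => (φI + ψ * Real.exp (-γ * max (σ * qf * u) Sm))
            * Real.exp (-k * δa) * (δa + V₁)) (Set.Ici (-δia))
          (max (1 / k - V₁) (-δia)) ∧
        IsMaxOn (fun δb : ℝ => (φI + ψ * Real.exp (γ * min (σ * qf * u) Sp))
            * Real.exp (-k * δb) * (δb + V₂)) (Set.Ici (-δib))
          (max (1 / k - V₂) (-δib)) ∧
        mmHam k γ σ qf φI ψ Sm Sp δia δib qlow qhigh q u V₁ V₂
          = (if qlow < q then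
              (φI + ψ * Real.exp (-γ * max (σ * qf * u) Sm))
                * Real.exp (-k * max (1 / k - V₁) (-δia)) * (max (1 / k - V₁) (-δia) + V₁)
            else 0)
          + (if q < qhigh then
              (φI + ψ * Real.exp (γ * min (σ * qf * u) Sp))
                * Real.exp (-k * max (1 / k - V₂) (-δib)) * (max (1 / k - V₂) (-δib) + V₂)
            else 0) := by
  have hc1 : ∀ u : ℝ, 0 ≤ φI + ψ * Real.exp (-γ * max (σ * qf * u) Sm) := by
    intro u; positivity
  have hc2 : ∀ u : ℝ, 0 ≤ φI + ψ * Real.exp (γ * min (σ * qf * u) Sp) := by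
    intro u; positivity
  have heq : ∀ (q : ℤ) (u V₁ V₂ : ℝ),
      mmHam k γ σ qf φI ψ Sm Sp δia δib qlow qhigh q u V₁ V₂
        = (if qlow < q then
            (φI + ψ * Real.exp (-γ * max (σ * qf * u) Sm))
              * Real.exp (-k * max (1 / k - V₁) (-δia)) * (max (1 / k - V₁) (-δia) + V₁)
          else 0)
        + (if q < qhigh then
            (φI + ψ * Real.exp (γ * min (σ * qf * u) Sp))
              * Real.exp (-k * max (1 / k - V₂) (-δib)) * (max (1 / k - V₂) (-δib) + V₂)
          else 0) := by
    intro q u V₁ V₂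
    rw [mmHam, (greatest k V₁ δia _ hk (hc1 u)).csSup_eq,
      (greatest k V₂ δib _ hk (hc2 u)).csSup_eq]
  refine ⟨?_, fun q u V₁ V₂ =>
    ⟨maxon k V₁ δia _ hk (hc1 u), maxon k V₂ δib _ hk (hc2 u), heq q u V₁ V₂⟩⟩
  have heq2 : (fun x : ℤ × ℝ × ℝ × ℝ =>
      mmHam k γ σ qf φI ψ Sm Sp δia δib qlow qhigh x.1 x.2.1 x.2.2.1 x.2.2.2)
      = fun x : ℤ × ℝ × ℝ × ℝ =>
        (if qlow < x.1 then (1:ℝ) else 0) *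
          ((φI + ψ * Real.exp (-γ * max (σ * qf * x.2.1) Sm))
            * Real.exp (-k * max (1 / k - x.2.2.1) (-δia)) * (max (1 / k - x.2.2.1) (-δia) + x.2.2.1))
        + (if x.1 < qhigh then (1:ℝ) else 0) *
          ((φI + ψ * Real.exp (γ * min (σ * qf * x.2.1) Sp))
            * Real.exp (-k * max (1 / k - x.2.2.2) (-δib)) * (max (1 / k - x.2.2.2) (-δib) + x.2.2.2)) := by
    funext x
    rw [heq x.1 x.2.1 x.2.2.1 x.2.2.2]
    split_ifs <;> ring
  rw [heq2]
  have hd1 : Continuous fun x : ℤ × ℝ × ℝ × ℝ => (if qlow < x.1 then (1:ℝ) else 0) :=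
    (continuous_of_discreteTopology (f := fun q : ℤ => if qlow < q then (1:ℝ) else 0)).comp
      continuous_fst
  have hd2 : Continuous fun x : ℤ × ℝ × ℝ × ℝ => (if x.1 < qhigh then (1:ℝ) else 0) :=
    (continuous_of_discreteTopology (f := fun q : ℤ => if q < qhigh then (1:ℝ) else 0)).comp
      continuous_fst
  fun_prop
end
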